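/- Let φ be a 1-coercive Legendre distance-generating function on ℝ^n and f : dom φ → (-∞,∞] proper, lsc, φ-prox-bounded. Fix λ ∈ (0, λ_f) and x̄ ∈ int dom φ. Then ∂_λ^φ f(x̄) is a singleton if and only if conv(f + λ^{-1}φ) is differentiable at x̄ and coincides with f + λ^{-1}φ at x̄. In that case, ∇conv(f + λ^{-1}φ)(x̄) = ū + λ^{-1}∇φ(x̄), where {ū} = ∂_λ^φ f(x̄). -/

import Mathlib

open Set Filter Topology RealInnerProductSpace

noncomputable section

variable {n : ℕ}

local notation "En" => EuclideanSpace ℝ (Fin n)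

/-- The Bregman distance induced by `φ` with gradient map `gradφ`. -/
def breg (φ : En → ℝ) (gradφ : En → En) (x y : En) : ℝ :=
  φ x - φ y - ⟪gradφ y, x - y⟫

/-- The Fenchel subdifferential of `φ` (viewed as `+∞` off `domφ`). -/
def fenchelSub (φ : En → ℝ) (domφ : Set En) (x : En) : Set En :=
  {u | x ∈ domφ ∧ ∀ x' ∈ domφ, φ x + ⟪u, x' - x⟫ ≤ φ x'}

/-- `φ` (viewed as `+∞` off `domφ`) is a Legendre function. -/
def IsLegendre (φ : En → ℝ) (domφ : Set En) (gradφ : En → En) : Prop :=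
  (interior domφ).Nonempty ∧
  LowerSemicontinuousOn φ domφ ∧ ConvexOn ℝ domφ φ ∧
  (∀ y ∈ interior domφ, HasGradientWithinAt φ (gradφ y) (interior domφ) y) ∧
  (∀ (xk : ℕ → En) (b : En), (∀ k, xk k ∈ interior domφ) →
      Tendsto xk atTop (𝓝 b) → b ∈ frontier domφ →
      Tendsto (fun k => ‖gradφ (xk k)‖) atTop atTop) ∧
  (∀ s : Set En, Convex ℝ s → s ⊆ {x | (fenchelSub φ domφ x).Nonempty} →
      StrictConvexOn ℝ s φ)

/-- `φ` is 1-coercive. -/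
def Coercive1 (φ : En → ℝ) (domφ : Set En) : Prop :=
  ∀ M : ℝ, ∃ R : ℝ, ∀ x ∈ domφ, R ≤ ‖x‖ → M * ‖x‖ ≤ φ x

/-- The left Bregman–Moreau envelope. -/
def envL (φ : En → ℝ) (domφ : Set En) (gradφ : En → En) (lam : ℝ)
    (f : En → EReal) (yb : En) : EReal :=
  ⨅ x ∈ domφ, (f x + ((lam⁻¹ * breg φ gradφ x yb : ℝ) : EReal))

/-- The left Bregman `λ`-level proximal subdifferential. -/
def psub (φ : En → ℝ) (domφ : Set En) (gradφ : En → En) (lam : ℝ)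
    (f : En → EReal) (xb : En) : Set En :=
  {u | xb ∈ interior domφ ∧ ∀ x ∈ domφ,
      f xb + ((⟪u, x - xb⟫ - lam⁻¹ * breg φ gradφ x xb : ℝ) : EReal) ≤ f x}

/-- Convexity of an `EReal`-valued function on `ℝⁿ`. -/
def ConvexE (g : En → EReal) : Prop :=
  ∀ x y : En, ∀ t : ℝ, 0 < t → t < 1 →
    g (t • x + (1 - t) • y) ≤ (t : EReal) * g x + ((1 - t : ℝ) : EReal) * g y

/-- The convex hull of `ψ : ℝⁿ → [-∞,∞]`. -/
def convHullE (ψ : En → EReal) (x : En) : EReal :=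
  sSup {r | ∃ g, ConvexE g ∧ (∀ y, g y ≤ ψ y) ∧ r = g x}

/-- `g` is (Fréchet) differentiable at `x̄` with gradient `v`. -/
def DiffAtE (g : En → EReal) (xb v : En) : Prop :=
  g xb ≠ ⊤ ∧ g xb ≠ ⊥ ∧ ∀ ε : ℝ, 0 < ε → ∀ᶠ y in 𝓝 xb,
    g xb + ((⟪v, y - xb⟫ - ε * ‖y - xb‖ : ℝ) : EReal) ≤ g y ∧
    g y ≤ g xb + ((⟪v, y - xb⟫ + ε * ‖y - xb‖ : ℝ) : EReal)



lemma convHullE_le (ψ : En → EReal) (x : En) : convHullE ψ x ≤ ψ x := by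
  apply sSup_le
  rintro r ⟨g, hg, hle, rfl⟩
  exact hle x

lemma convexE_convHullE (ψ : En → EReal) : ConvexE (convHullE ψ) := by
  intro x y t ht ht1
  apply sSup_le
  rintro r ⟨g, hg, hle, rfl⟩
  calc g (t • x + (1 - t) • y) ≤ (t : EReal) * g x + ((1 - t : ℝ) : EReal) * g y :=
        hg x y t ht ht1
    _ ≤ (t : EReal) * convHullE ψ x + ((1 - t : ℝ) : EReal) * convHullE ψ y := by
        refine add_le_add ?_ ?_
        · exact mul_le_mul_of_nonneg_left (le_sSup ⟨g, hg, hle, rfl⟩)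
            (by exact_mod_cast ht.le)
        · exact mul_le_mul_of_nonneg_left (le_sSup ⟨g, hg, hle, rfl⟩)
            (by exact_mod_cast (by linarith : (0:ℝ) ≤ 1 - t))

lemma affine_convexE (p : ℝ) (v z : En) :
    ConvexE (fun x => ((p + ⟪v, x - z⟫ : ℝ) : EReal)) := by
  intro x y t ht ht1
  have hco : (t • x + (1 - t) • y) - z = t • (x - z) + (1 - t) • (y - z) := by
    module
  have key : (p + ⟪v, (t • x + (1 - t) • y) - z⟫ : ℝ)
      = t * (p + ⟪v, x - z⟫) + (1 - t) * (p + ⟪v, y - z⟫) := by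
    rw [hco, inner_add_right, real_inner_smul_right, real_inner_smul_right]; ring
  simp only [key]
  rw [EReal.coe_add, EReal.coe_mul, EReal.coe_mul]

lemma le_convHullE_of_affine_le {ψ : En → EReal} {p : ℝ} {v z : En}
    (h : ∀ x, ((p + ⟪v, x - z⟫ : ℝ) : EReal) ≤ ψ x) (x : En) :
    ((p + ⟪v, x - z⟫ : ℝ) : EReal) ≤ convHullE ψ x :=
  le_sSup ⟨_, affine_convexE p v z, h, rfl⟩

lemma convHullE_at_eq {ψ : En → EReal} {p : ℝ} {v xb : En}
    (hψxb : ψ xb = (p : EReal))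
    (h : ∀ x, ((p + ⟪v, x - xb⟫ : ℝ) : EReal) ≤ ψ x) :
    convHullE ψ xb = (p : EReal) := by
  refine le_antisymm (by rw [← hψxb]; exact convHullE_le ψ xb) ?_
  have := le_convHullE_of_affine_le h xb
  simpa using this



def Ssub (ψ : En → EReal) (xb : En) (p : ℝ) : Set En :=
  {v | ∀ x, ((p + ⟪v, x - xb⟫ : ℝ) : EReal) ≤ ψ x}

lemma psub_iff_Ssub (φ : En → ℝ) (domφ : Set En) (gradφ : En → En) (lam : ℝ)
    (f : En → EReal) (hftop : ∀ x ∉ domφ, f x = ⊤) (hfbot : ∀ x, f x ≠ ⊥)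
    (xb : En) (hxb : xb ∈ interior domφ) (q : ℝ) (hq : f xb = (q : EReal)) (u : En) :
    u ∈ psub φ domφ gradφ lam f xb ↔
      (u + lam⁻¹ • gradφ xb) ∈
        Ssub (fun x => f x + ((lam⁻¹ * φ x : ℝ) : EReal)) xb (q + lam⁻¹ * φ xb) := by
  have hinner : ∀ x : En, ⟪u + lam⁻¹ • gradφ xb, x - xb⟫
      = ⟪u, x - xb⟫ + lam⁻¹ * ⟪gradφ xb, x - xb⟫ := by
    intro x
    rw [inner_add_left, real_inner_smul_left]
  constructor
  · rintro ⟨-, h⟩ x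
    dsimp only
    by_cases hx : x ∈ domφ
    · have h2 := h x hx
      rw [hq, ← EReal.coe_add] at h2
      by_cases hfx : f x = ⊤
      · rw [hfx, EReal.top_add_coe]; exact le_top
      · have hfx' : f x = ((f x).toReal : EReal) := (EReal.coe_toReal hfx (hfbot x)).symm
        rw [hfx'] at h2 ⊢
        rw [EReal.coe_le_coe_iff] at h2
        rw [← EReal.coe_add, EReal.coe_le_coe_iff]
        rw [hinner]
        simp only [breg] at h2
        linarith
    · rw [hftop x hx, EReal.top_add_coe]; exact le_top
  · intro h
    refine ⟨hxb, fun x hx => ?_⟩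
    have h2 := h x
    dsimp only at h2
    rw [hq, ← EReal.coe_add]
    by_cases hfx : f x = ⊤
    · rw [hfx]; exact le_top
    · have hfx' : f x = ((f x).toReal : EReal) := (EReal.coe_toReal hfx (hfbot x)).symm
      rw [hfx'] at h2 ⊢
      rw [← EReal.coe_add, EReal.coe_le_coe_iff] at h2
      rw [EReal.coe_le_coe_iff]
      rw [hinner] at h2
      simp only [breg]
      linarith

lemma convex_subset_closure_interior {D : Set En} (hD : Convex ℝ D)
    (hne : (interior D).Nonempty) : D ⊆ closure (interior D) := by
  obtain ⟨z, hz⟩ := hne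
  intro y hy
  have hseq : ∀ k : ℕ, (1/(k+2) : ℝ) • z + (1 - 1/(k+2) : ℝ) • y ∈ interior D := by
    intro k
    have hk2 : (0:ℝ) < 1/(k+2) := by positivity
    have hk3 : (1 : ℝ)/(k+2) ≤ 1 := by
      rw [div_le_one (by positivity)]
      linarith [Nat.cast_nonneg (α := ℝ) k]
    exact hD.combo_interior_closure_mem_interior hz (subset_closure hy) hk2
      (by linarith) (by ring)
  have htend : Tendsto (fun k : ℕ => (1/(k+2) : ℝ) • z + (1 - 1/(k+2) : ℝ) • y)
      atTop (𝓝 y) := by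
    have h0 : Tendsto (fun k : ℕ => (1/(k+2) : ℝ)) atTop (𝓝 0) := by
      have hat : Tendsto (fun k : ℕ => ((k:ℝ)+2)) atTop atTop :=
        tendsto_atTop_add_const_right atTop 2 tendsto_natCast_atTop_atTop
      simpa [one_div, Pi.inv_def] using hat.inv_tendsto_atTop
    have : Tendsto (fun k : ℕ => (1/(k+2) : ℝ) • z + (1 - 1/(k+2) : ℝ) • y) atTop
        (𝓝 ((0:ℝ) • z + (1 - 0 : ℝ) • y)) := by
      exact ((h0.smul_const z).add (((tendsto_const_nhds.sub h0)).smul_const y))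
    simpa using this
  exact mem_closure_of_tendsto htend (Eventually.of_forall hseq)

lemma exists_normal {D : Set En} (hD : Convex ℝ D) {xb : En} (hxbD : xb ∈ D)
    (hni : xb ∉ interior D) : ∃ w : En, w ≠ 0 ∧ ∀ y ∈ D, ⟪w, y - xb⟫ ≤ 0 := by
  by_cases hne : (interior D).Nonempty
  · obtain ⟨F, hF⟩ := geometric_hahn_banach_open_point (hD.interior) isOpen_interior hni
    refine ⟨(InnerProductSpace.toDual ℝ (EuclideanSpace ℝ (Fin n))).symm F, ?_, ?_⟩
    · obtain ⟨a, ha⟩ := hne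
      intro h0
      have hFa : F a = 0 := by
        rw [← InnerProductSpace.toDual_symm_apply (y := F), h0]; simp
      have hFxb : F xb = 0 := by
        rw [← InnerProductSpace.toDual_symm_apply (y := F), h0]; simp
      have hlt := hF a ha
      rw [hFa, hFxb] at hlt
      exact lt_irrefl _ hlt
    · intro y hy
      have hcl : y ∈ closure (interior D) := convex_subset_closure_interior hD hne hy
      have hle : F y ≤ F xb := by
        have hsub : closure (interior D) ⊆ {z | F z ≤ F xb} := by
          apply closure_minimal
          · intro z hz; exact (hF z hz).le
          · exact isClosed_le F.continuous continuous_const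
        exact hsub hcl
      have : ⟪(InnerProductSpace.toDual ℝ (EuclideanSpace ℝ (Fin n))).symm F, y - xb⟫ = F (y - xb) :=
        InnerProductSpace.toDual_symm_apply
      rw [this, map_sub]
      linarith
  · have haff : affineSpan ℝ D ≠ ⊤ := by
      intro h
      rw [← hD.interior_nonempty_iff_affineSpan_eq_top] at h
      exact hne h
    set V := (affineSpan ℝ D).direction with hV
    have hVne : V ≠ ⊤ := by
      intro h
      apply haff
      rw [← AffineSubspace.direction_eq_top_iff_of_nonempty
        ((affineSpan_nonempty ℝ).2 ⟨xb, hxbD⟩)]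
      exact h
    have hVorth : Vᗮ ≠ ⊥ := fun h => hVne (Submodule.orthogonal_eq_bot_iff.1 h)
    obtain ⟨w, hwV, hw0⟩ := Submodule.exists_mem_ne_zero_of_ne_bot hVorth
    refine ⟨w, hw0, fun y hy => ?_⟩
    have hyV : y - xb ∈ V := by
      have h1 : y ∈ affineSpan ℝ D := subset_affineSpan ℝ D hy
      have h2 : xb ∈ affineSpan ℝ D := subset_affineSpan ℝ D hxbD
      simpa using AffineSubspace.vsub_mem_direction h1 h2
    have := (Submodule.mem_orthogonal V w).1 hwV (y - xb) hyV
    rw [real_inner_comm] at this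
    rw [this]



set_option maxHeartbeats 1000000 in
theorem coreDiff (g : En → EReal) (hconv : ConvexE g) (xb : En) (p : ℝ)
    (hgxb : g xb = (p : EReal)) (v : En)
    (hv : ∀ x, ((p + ⟪v, x - xb⟫ : ℝ) : EReal) ≤ g x)
    (huniq : ∀ w, (∀ x, ((p + ⟪w, x - xb⟫ : ℝ) : EReal) ≤ g x) → w = v) :
    DiffAtE g xb v := by
  have hbot : ∀ x, g x ≠ ⊥ := by
    intro x h
    have := hv x
    rw [h, le_bot_iff] at this
    exact EReal.coe_ne_bot _ this
  set D : Set En := {x | g x ≠ ⊤} with hDdef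
  have hxbD : xb ∈ D := by simp only [hDdef, mem_setOf_eq, hgxb]; exact EReal.coe_ne_top p
  have hDconv : Convex ℝ D := by
    intro x hx y hy a b ha hb hab
    rcases ha.eq_or_lt with ha0 | ha0
    · have hb1 : b = 1 := by linarith
      simp [← ha0, hb1]; exact hy
    rcases hb.eq_or_lt with hb0 | hb0
    · have ha1 : a = 1 := by linarith
      simp [← hb0, ha1]; exact hx
    · have hb' : b = 1 - a := by linarith
      have ha1 : a < 1 := by linarith
      have hle := hconv x y a ha0 ha1
      have hgx := EReal.coe_toReal hx (hbot x)
      have hgy := EReal.coe_toReal hy (hbot y)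
      have hsum : (a : EReal) * g x + ((1 - a : ℝ) : EReal) * g y
          = ((a * (g x).toReal + (1 - a) * (g y).toReal : ℝ) : EReal) := by
        rw [EReal.coe_add, EReal.coe_mul, EReal.coe_mul, hgx, hgy]
      rw [hsum] at hle
      show g (a • x + b • y) ≠ ⊤
      rw [hb']
      exact ne_top_of_le_ne_top (EReal.coe_ne_top _) hle
  have hxbi : xb ∈ interior D := by
    by_contra hni
    obtain ⟨w, hw0, hw⟩ := exists_normal hDconv hxbD hni
    apply hw0
    have hvw : ∀ x, ((p + ⟪v + w, x - xb⟫ : ℝ) : EReal) ≤ g x := by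
      intro x
      by_cases hx : g x = ⊤
      · rw [hx]; exact le_top
      · refine le_trans ?_ (hv x)
        rw [EReal.coe_le_coe_iff, inner_add_left]
        have := hw x hx
        linarith
    have := huniq _ hvw
    exact add_eq_left.1 this
  obtain ⟨r, hr0, hball⟩ := Metric.isOpen_iff.1 isOpen_interior xb hxbi
  have hballD : Metric.ball xb r ⊆ D := fun y hy => interior_subset (hball hy)
  set Gr : En → ℝ := fun x => (g x).toReal with hGrdef
  have hGrD : ∀ x ∈ D, g x = ((Gr x : ℝ) : EReal) := fun x hx =>
    (EReal.coe_toReal hx (hbot x)).symm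
  have hGrxb : Gr xb = p := by simp [hGrdef, hgxb]
  have hvGr : ∀ y ∈ D, p + ⟪v, y - xb⟫ ≤ Gr y := by
    intro y hy
    have := hv y
    rw [hGrD y hy, EReal.coe_le_coe_iff] at this
    exact this
  have hGrconv : ConvexOn ℝ D Gr := by
    refine ⟨hDconv, ?_⟩
    intro x hx y hy a b ha hb hab
    rcases ha.eq_or_lt with ha0 | ha0
    · have hb1 : b = 1 := by linarith
      simp [← ha0, hb1]
    rcases hb.eq_or_lt with hb0 | hb0
    · have ha1 : a = 1 := by linarith
      simp [← hb0, ha1]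
    · have hb' : b = 1 - a := by linarith
      have ha1 : a < 1 := by linarith
      have hle := hconv x y a ha0 ha1
      have hmem : a • x + b • y ∈ D := hDconv hx hy ha hb hab
      rw [hGrD x hx, hGrD y hy, ← EReal.coe_mul, ← EReal.coe_mul, ← EReal.coe_add] at hle
      rw [hb'] at hmem ⊢
      rw [hGrD _ hmem, EReal.coe_le_coe_iff] at hle
      exact hle
  have hcont : ContinuousOn Gr (interior D) :=
    (hGrconv.subset interior_subset hDconv.interior).continuousOn isOpen_interior
  have hmemball : ∀ (d : En) (t : ℝ), 0 < t → t * ‖d‖ < r → xb + t • d ∈ Metric.ball xb r := by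
    intro d t ht htr
    simp only [Metric.mem_ball, dist_eq_norm, add_sub_cancel_left, norm_smul,
      Real.norm_eq_abs, abs_of_pos ht]
    exact htr
  have key_mono : ∀ (d : En) (s t : ℝ), 0 < s → s ≤ t → t * ‖d‖ < r →
      (Gr (xb + s • d) - p) / s ≤ (Gr (xb + t • d) - p) / t := by
    intro d s t hs hst htr
    have ht : (0:ℝ) < t := lt_of_lt_of_le hs hst
    have hsr : s * ‖d‖ < r :=
      lt_of_le_of_lt (mul_le_mul_of_nonneg_right hst (norm_nonneg d)) htr
    have hmemt : xb + t • d ∈ D := hballD (hmemball d t ht htr)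
    have hmems : xb + s • d ∈ D := hballD (hmemball d s hs hsr)
    have h1 : (s/t) * t = s := div_mul_cancel₀ s ht.ne'
    have hcomb : xb + s • d = (1 - s/t) • xb + (s/t) • (xb + t • d) := by
      rw [smul_add, smul_smul, h1]
      module
    have hst1 : s / t ≤ 1 := by
      rw [div_le_one ht]; exact hst
    have hcv := hGrconv.2 hxbD hmemt (show (0:ℝ) ≤ 1 - s/t by linarith)
      (show (0:ℝ) ≤ s/t by positivity) (by ring)
    rw [← hcomb, hGrxb] at hcv
    rw [div_le_div_iff₀ hs ht]
    simp only [smul_eq_mul] at hcv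
    have hcvt := mul_le_mul_of_nonneg_right hcv ht.le
    have hexp : ((1 - s/t) * p + (s/t) * Gr (xb + t • d)) * t
        = p * t - s * p + s * Gr (xb + t • d) := by
      field_simp
    rw [hexp] at hcvt
    nlinarith [hcvt]
  have key_lb : ∀ (d : En) (t : ℝ), 0 < t → t * ‖d‖ < r →
      p + t * ⟪v, d⟫ ≤ Gr (xb + t • d) := by
    intro d t ht htr
    have hmem : xb + t • d ∈ D := hballD (hmemball d t ht htr)
    have := hvGr _ hmem
    rw [add_sub_cancel_left, real_inner_smul_right] at this
    exact this
  set Q : En → Set ℝ :=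
    fun d => (fun t => (Gr (xb + t • d) - p) / t) '' {t | 0 < t ∧ t * ‖d‖ < r} with hQdef
  have hQne : ∀ d, (Q d).Nonempty := by
    intro d
    refine ⟨_, ⟨r/(2*(‖d‖+1)), ⟨by positivity, ?_⟩, rfl⟩⟩
    rw [div_mul_eq_mul_div, div_lt_iff₀ (by positivity)]
    nlinarith [norm_nonneg d]
  have hQlb : ∀ d, ∀ q ∈ Q d, ⟪v, d⟫ ≤ q := by
    rintro d q ⟨t, ⟨ht, htr⟩, rfl⟩
    have := key_lb d t ht htr
    rw [le_div_iff₀ ht]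
    nlinarith
  set N : En → ℝ := fun d => sInf (Q d) with hNdef
  have hNlb : ∀ d, ⟪v, d⟫ ≤ N d := fun d => le_csInf (hQne d) (hQlb d)
  have hNle : ∀ (d : En) (t : ℝ), 0 < t → t * ‖d‖ < r →
      N d ≤ (Gr (xb + t • d) - p) / t := fun d t ht htr =>
    csInf_le ⟨⟪v, d⟫, hQlb d⟩ ⟨t, ⟨ht, htr⟩, rfl⟩
  have hNlt : ∀ (d : En) (ε : ℝ), 0 < ε → ∃ t : ℝ, 0 < t ∧ t ≤ 1 ∧ t * ‖d‖ < r ∧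
      (Gr (xb + t • d) - p) / t < N d + ε := by
    intro d ε hε
    have hlt : sInf (Q d) < N d + ε := lt_add_of_pos_right _ hε
    obtain ⟨q, ⟨t, ⟨ht, htr⟩, rfl⟩, hq⟩ := (csInf_lt_iff ⟨⟪v, d⟫, hQlb d⟩ (hQne d)).1 hlt
    refine ⟨min t 1, lt_min ht one_pos, min_le_right t 1, ?_, ?_⟩
    · exact lt_of_le_of_lt (mul_le_mul_of_nonneg_right (min_le_left t 1) (norm_nonneg d)) htr
    · exact lt_of_le_of_lt (key_mono d (min t 1) t (lt_min ht one_pos) (min_le_left t 1) htr) hq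
  have hNhom : ∀ c : ℝ, 0 < c → ∀ d : En, N (c • d) = c * N d := by
    intro c hc d
    refine le_antisymm ?_ ?_
    · have hlow : ∀ q ∈ Q d, N (c • d) / c ≤ q := by
        rintro q ⟨t, ⟨ht, htr⟩, rfl⟩
        rw [div_le_iff₀ hc, div_mul_eq_mul_div]
        have hval : (t/c) * ‖c • d‖ < r := by
          rw [norm_smul, Real.norm_eq_abs, abs_of_pos hc]
          have heq2 : t/c * (c * ‖d‖) = t * ‖d‖ := by field_simp; try ring
          rw [heq2]; exact htr
        have := hNle (c • d) (t/c) (by positivity) hval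
        calc N (c • d) ≤ (Gr (xb + (t/c) • c • d) - p) / (t/c) := this
          _ = (Gr (xb + t • d) - p) * c / t := by
              rw [smul_smul, div_mul_cancel₀ t hc.ne', div_div_eq_mul_div]
      have := le_csInf (hQne d) hlow
      rw [div_le_iff₀ hc] at this
      linarith [this]
    · have hlow : ∀ q ∈ Q (c • d), c * N d ≤ q := by
        rintro q ⟨t, ⟨ht, htr⟩, rfl⟩
        show c * N d ≤ (Gr (xb + t • (c • d)) - p) / t
        rw [smul_smul]
        have hval : (t*c) * ‖d‖ < r := by
          rw [norm_smul, Real.norm_eq_abs, abs_of_pos hc] at htr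
          calc (t*c)*‖d‖ = t * (c * ‖d‖) := by ring
            _ < r := htr
        have := hNle d (t*c) (by positivity) hval
        have heq : c * ((Gr (xb + (t*c) • d) - p) / (t*c)) = (Gr (xb + (t*c) • d) - p) / t := by
          field_simp
          try ring
        rw [← heq]
        exact mul_le_mul_of_nonneg_left this hc.le
      exact le_csInf (hQne (c • d)) hlow
  have hN0 : N 0 = 0 := by
    obtain ⟨q0, hq0⟩ := hQne 0
    have hall : ∀ q ∈ Q 0, q = 0 := by
      rintro q ⟨t, ⟨ht, htr⟩, rfl⟩
      simp [hGrxb, smul_zero]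
    have h0mem : (0:ℝ) ∈ Q 0 := by rw [← hall q0 hq0]; exact hq0
    exact le_antisymm (csInf_le ⟨⟪v, (0:EuclideanSpace ℝ (Fin n))⟫, hQlb 0⟩ h0mem)
      (le_csInf ⟨0, h0mem⟩ fun b hb => le_of_eq (hall b hb).symm)
  have hNadd : ∀ d₁ d₂ : En, N (d₁ + d₂) ≤ N d₁ + N d₂ := by
    intro d₁ d₂
    refine le_of_forall_pos_le_add ?_
    intro ε hε
    obtain ⟨t₁, ht₁0, ht₁1, ht₁r, ht₁q⟩ := hNlt d₁ (ε/2) (by positivity)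
    obtain ⟨t₂, ht₂0, ht₂1, ht₂r, ht₂q⟩ := hNlt d₂ (ε/2) (by positivity)
    set t := min t₁ t₂ / 2 with htdef
    have ht0 : 0 < t := by positivity
    have h2t1 : 2 * t ≤ t₁ := by
      rw [htdef]; rw [mul_div_cancel₀]
      exact min_le_left t₁ t₂
      norm_num
    have h2t2 : 2 * t ≤ t₂ := by
      rw [htdef]; rw [mul_div_cancel₀]
      exact min_le_right t₁ t₂
      norm_num
    have hv1 : (2*t) * ‖d₁‖ < r :=
      lt_of_le_of_lt (mul_le_mul_of_nonneg_right h2t1 (norm_nonneg d₁)) ht₁r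
    have hv2 : (2*t) * ‖d₂‖ < r :=
      lt_of_le_of_lt (mul_le_mul_of_nonneg_right h2t2 (norm_nonneg d₂)) ht₂r
    have hvsum : t * ‖d₁ + d₂‖ < r := by
      have : t * ‖d₁ + d₂‖ ≤ t * (‖d₁‖ + ‖d₂‖) :=
        mul_le_mul_of_nonneg_left (norm_add_le d₁ d₂) ht0.le
      nlinarith
    have hcomb : xb + t • (d₁ + d₂)
        = (1/2 : ℝ) • (xb + (2*t) • d₁) + (1/2 : ℝ) • (xb + (2*t) • d₂) := by
      module
    have hm1 : xb + (2*t) • d₁ ∈ D := hballD (hmemball d₁ (2*t) (by positivity) hv1)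
    have hm2 : xb + (2*t) • d₂ ∈ D := hballD (hmemball d₂ (2*t) (by positivity) hv2)
    have hcv := hGrconv.2 hm1 hm2 (show (0:ℝ) ≤ 1/2 by norm_num)
      (show (0:ℝ) ≤ 1/2 by norm_num) (by norm_num)
    rw [← hcomb] at hcv
    simp only [smul_eq_mul] at hcv
    have hchain : (Gr (xb + t • (d₁ + d₂)) - p) / t
        ≤ (Gr (xb + (2*t) • d₁) - p) / (2*t) + (Gr (xb + (2*t) • d₂) - p) / (2*t) := by
      rw [← add_div, div_le_div_iff₀ ht0 (by positivity : (0:ℝ) < 2*t)]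
      nlinarith [hcv]
    have hq1 : (Gr (xb + (2*t) • d₁) - p) / (2*t) ≤ (Gr (xb + t₁ • d₁) - p) / t₁ :=
      key_mono d₁ (2*t) t₁ (by positivity) h2t1 ht₁r
    have hq2 : (Gr (xb + (2*t) • d₂) - p) / (2*t) ≤ (Gr (xb + t₂ • d₂) - p) / t₂ :=
      key_mono d₂ (2*t) t₂ (by positivity) h2t2 ht₂r
    have hstart := hNle (d₁ + d₂) t ht0 hvsum
    linarith
  have hNself : ∀ d : En, N d = ⟪v, d⟫ := by
    intro d
    refine le_antisymm ?_ (hNlb d)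
    by_contra hlt
    push_neg at hlt
    have hd0 : d ≠ 0 := by
      rintro rfl
      rw [hN0] at hlt
      simp at hlt
    have hH : ∀ c : ℝ, c • d = 0 → c • N d = 0 := by
      intro c hc
      rcases smul_eq_zero.1 hc with h | h
      · rw [h, zero_smul]
      · exact absurd h hd0
    set fp : EuclideanSpace ℝ (Fin n) →ₗ.[ℝ] ℝ :=
      LinearPMap.mkSpanSingleton' d (N d) hH with hfpdef
    have hfle : ∀ z : fp.domain, fp z ≤ N z := by
      rintro ⟨z, hz⟩
      have hz' : z ∈ Submodule.span ℝ {d} := hz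
      obtain ⟨α, hα⟩ := Submodule.mem_span_singleton.1 hz'
      subst hα
      have happ : fp ⟨α • d, hz⟩ = α • N d :=
        LinearPMap.mkSpanSingleton'_apply d (N d) hH α _
      rw [happ]
      show α • N d ≤ N (α • d)
      rcases lt_trichotomy α 0 with hα0 | hα0 | hα0
    /- α < 0 -/
      · have hsum : α • d + (-α) • d = (0:EuclideanSpace ℝ (Fin n)) := by
          rw [← add_smul]
          simp
        have h1 := hNadd (α • d) ((-α) • d)
        rw [hsum, hN0] at h1
        have h2 : N ((-α) • d) = (-α) * N d := hNhom (-α) (by linarith) d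
        rw [h2] at h1
        simp only [smul_eq_mul]
        linarith
      · subst hα0
        simp [hN0]
      · rw [hNhom α hα0 d, smul_eq_mul]
    obtain ⟨ℓ, hℓeq, hℓle⟩ := exists_extension_of_le_sublinear fp N
      (fun c hc x => hNhom c hc x) hNadd hfle
    set w : EuclideanSpace ℝ (Fin n) :=
      (InnerProductSpace.toDual ℝ (EuclideanSpace ℝ (Fin n))).symm
        (LinearMap.toContinuousLinearMap ℓ) with hwdef
    have hwinner : ∀ x : EuclideanSpace ℝ (Fin n), ⟪w, x⟫ = ℓ x := by
      intro x
      rw [hwdef, InnerProductSpace.toDual_symm_apply]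
      rfl
    have hws : ∀ x, ((p + ⟪w, x - xb⟫ : ℝ) : EReal) ≤ g x := by
      intro x
      by_cases hx : g x = ⊤
      · rw [hx]; exact le_top
      · set t : ℝ := min 1 (r/(2*(‖x - xb‖+1))) with htdef
        have ht0 : 0 < t := lt_min one_pos (by positivity)
        have ht1 : t ≤ 1 := min_le_left _ _
        have htr : t * ‖x - xb‖ < r := by
          have h1 : t ≤ r/(2*(‖x - xb‖+1)) := min_le_right _ _
          have h2 : t * ‖x - xb‖ ≤ (r/(2*(‖x - xb‖+1))) * ‖x - xb‖ :=
            mul_le_mul_of_nonneg_right h1 (norm_nonneg _)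
          refine lt_of_le_of_lt h2 ?_
          rw [div_mul_eq_mul_div, div_lt_iff₀ (by positivity)]
          nlinarith [norm_nonneg (x - xb)]
        have h1 : ℓ (t • (x - xb)) ≤ N (t • (x - xb)) := hℓle _
        have hval1 : (1:ℝ) * ‖t • (x - xb)‖ < r := by
          rw [one_mul, norm_smul, Real.norm_eq_abs, abs_of_pos ht0]
          exact htr
        have h2 := hNle (t • (x - xb)) 1 one_pos hval1
        rw [one_smul, div_one] at h2
        have hcomb : xb + t • (x - xb) = (1 - t) • xb + t • x := by module
        have hmemD : xb + t • (x - xb) ∈ D := hballD (hmemball _ t ht0 htr)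
        have hcv := hGrconv.2 hxbD hx (show (0:ℝ) ≤ 1 - t by linarith)
          (le_of_lt ht0) (by ring)
        rw [← hcomb] at hcv
        simp only [smul_eq_mul] at hcv
        rw [hGrxb] at hcv
        have hls : ℓ (t • (x - xb)) = t * ℓ (x - xb) := by
          rw [map_smul, smul_eq_mul]
        rw [hls] at h1
        have hfin : ℓ (x - xb) ≤ Gr x - p := by
          have := le_trans h1 h2
          nlinarith [this, hcv]
        rw [hGrD x hx, EReal.coe_le_coe_iff, hwinner (x - xb)]
        linarith
    have hwv := huniq w hws
    have hmd : d ∈ fp.domain := by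
      show d ∈ (LinearPMap.mkSpanSingleton' d (N d) hH).domain
      rw [LinearPMap.domain_mkSpanSingleton]
      exact Submodule.mem_span_singleton_self d
    have hld : ℓ d = N d := by
      have := hℓeq ⟨d, hmd⟩
      have happ : fp ⟨d, hmd⟩ = N d :=
        LinearPMap.mkSpanSingleton'_apply_self d (N d) hH _
      rw [happ] at this
      exact this
    have : ⟪v, d⟫ = N d := by
      rw [← hwv, hwinner, hld]
    linarith
  refine ⟨by rw [hgxb]; exact EReal.coe_ne_top p,
    by rw [hgxb]; exact EReal.coe_ne_bot p, ?_⟩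
  intro ε hε
  have hlower : ∀ y : EuclideanSpace ℝ (Fin n),
      g xb + ((⟪v, y - xb⟫ - ε * ‖y - xb‖ : ℝ) : EReal) ≤ g y := by
    intro y
    rw [hgxb, ← EReal.coe_add]
    refine le_trans ?_ (hv y)
    rw [EReal.coe_le_coe_iff]
    have : 0 ≤ ε * ‖y - xb‖ := by positivity
    linarith
  have htriv : ∀ y : EuclideanSpace ℝ (Fin n), y = xb →
      g y ≤ g xb + ((⟪v, y - xb⟫ + ε * ‖y - xb‖ : ℝ) : EReal) := by
    rintro y rfl
    simp
  have hzt : ∀ z : EuclideanSpace ℝ (Fin n), ∃ t : ℝ, 0 < t ∧ t ≤ 1 ∧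
      (z ∈ Metric.sphere xb (r/2) →
        (Gr (xb + t • (z - xb)) - p) / t < ⟪v, z - xb⟫ + ε * (r/2)) := by
    intro z
    by_cases hz : z ∈ Metric.sphere xb (r/2)
    · obtain ⟨t, ht0, ht1, htr, htq⟩ := hNlt (z - xb) (ε * (r/2)) (by positivity)
      refine ⟨t, ht0, ht1, fun _ => ?_⟩
      rw [hNself (z - xb)] at htq
      exact htq
    · exact ⟨1, one_pos, le_refl 1, fun h => absurd h hz⟩
  choose T hT0 hT1 hTq using hzt
  set V : EuclideanSpace ℝ (Fin n) → Set (EuclideanSpace ℝ (Fin n)) := fun z =>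
    Metric.ball xb r ∩
      (fun z' => Gr (xb + T z • (z' - xb)) - p - T z * (⟪v, z' - xb⟫ + ε * (r/2))) ⁻¹'
        (Iio 0) with hVdef
  have hVopen : ∀ z, IsOpen (V z) := by
    intro z
    refine ContinuousOn.isOpen_inter_preimage ?_ Metric.isOpen_ball isOpen_Iio
    have hm : Continuous fun z' : EuclideanSpace ℝ (Fin n) => xb + T z • (z' - xb) :=
      continuous_const.add ((continuous_id.sub continuous_const).const_smul (T z))
    have hmaps : MapsTo (fun z' : EuclideanSpace ℝ (Fin n) => xb + T z • (z' - xb))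
        (Metric.ball xb r) (interior D) := by
      intro z' hz'
      apply hball
      have hz'n : ‖z' - xb‖ < r := by rw [← dist_eq_norm]; exact Metric.mem_ball.1 hz'
      simp only [Metric.mem_ball, dist_eq_norm, add_sub_cancel_left, norm_smul,
        Real.norm_eq_abs, abs_of_pos (hT0 z)]
      calc T z * ‖z' - xb‖ ≤ 1 * ‖z' - xb‖ :=
            mul_le_mul_of_nonneg_right (hT1 z) (norm_nonneg _)
        _ < r := by rw [one_mul]; exact hz'n
    have hGrm : ContinuousOn
        (fun z' : EuclideanSpace ℝ (Fin n) => Gr (xb + T z • (z' - xb)))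
        (Metric.ball xb r) := hcont.comp hm.continuousOn hmaps
    have hin : Continuous fun z' : EuclideanSpace ℝ (Fin n) =>
        T z * (⟪v, z' - xb⟫ + ε * (r/2)) :=
      continuous_const.mul ((continuous_const.inner
        (continuous_id.sub continuous_const)).add continuous_const)
    exact (hGrm.sub continuousOn_const).sub hin.continuousOn
  have hzV : ∀ z ∈ Metric.sphere xb (r/2), z ∈ V z := by
    intro z hz
    have hznorm : ‖z - xb‖ = r/2 := by
      rw [← dist_eq_norm]; exact Metric.mem_sphere.1 hz
    constructor
    · simp only [Metric.mem_ball, dist_eq_norm, hznorm]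
      linarith
    · have := hTq z hz
      rw [div_lt_iff₀ (hT0 z)] at this
      simp only [mem_preimage, mem_Iio]
      nlinarith [this]
  have hcover : Metric.sphere xb (r/2) ⊆ ⋃ z ∈ Metric.sphere xb (r/2), V z :=
    fun z hz => mem_biUnion hz (hzV z hz)
  obtain ⟨b', hb'sub, hb'fin, hb'cov⟩ :=
    (isCompact_sphere xb (r/2)).elim_finite_subcover_image
      (fun z _ => hVopen z) hcover
  -- helper: construct the sphere point from y ≠ xb
  have hsphpt : ∀ y : EuclideanSpace ℝ (Fin n), y ≠ xb →
      xb + ((r/2)/‖y - xb‖) • (y - xb) ∈ Metric.sphere xb (r/2) := by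
    intro y hyx
    have hu0 : 0 < ‖y - xb‖ := norm_pos_iff.2 (sub_ne_zero.2 hyx)
    have : dist (xb + ((r/2)/‖y - xb‖) • (y - xb)) xb = r/2 := by
      rw [dist_eq_norm, add_sub_cancel_left, norm_smul, Real.norm_eq_abs,
        abs_of_pos (by positivity : (0:ℝ) < (r/2)/‖y - xb‖),
        div_mul_cancel₀ _ hu0.ne']
    exact this
  by_cases hbne : b'.Nonempty
  · set F := hb'fin.toFinset with hFdef
    have hFne : F.Nonempty := by
      rw [hFdef, Set.Finite.toFinset_nonempty]; exact hbne
    set δ₀ : ℝ := F.inf' hFne (fun z => T z * (r/2)) with hδ₀def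
    have hδ₀pos : 0 < δ₀ := by
      rw [hδ₀def, Finset.lt_inf'_iff]
      intro z hz
      have := hT0 z
      positivity
    set δ : ℝ := min δ₀ (r/2) with hδdef
    have hδpos : 0 < δ := lt_min hδ₀pos (by positivity)
    filter_upwards [Metric.ball_mem_nhds xb hδpos] with y hy
    refine ⟨hlower y, ?_⟩
    by_cases hyx : y = xb
    · exact htriv y hyx
    · have hu0 : 0 < ‖y - xb‖ := norm_pos_iff.2 (sub_ne_zero.2 hyx)
      have hur : ‖y - xb‖ < δ := by rw [← dist_eq_norm]; exact Metric.mem_ball.1 hy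
      set z := xb + ((r/2)/‖y - xb‖) • (y - xb) with hzdef
      have hzsph : z ∈ Metric.sphere xb (r/2) := hsphpt y hyx
      obtain ⟨i, hib, hzi⟩ := mem_iUnion₂.1 (hb'cov hzsph)
      obtain ⟨-, hzi2⟩ := hzi
      rw [mem_preimage, mem_Iio] at hzi2
      have hiF : i ∈ F := by rw [hFdef, Set.Finite.mem_toFinset]; exact hib
      have hδ₀i : δ₀ ≤ T i * (r/2) := Finset.inf'_le _ hiF
      have hd : z - xb = ((r/2)/‖y - xb‖) • (y - xb) := by
        rw [hzdef, add_sub_cancel_left]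
      have hznorm : ‖z - xb‖ = r/2 := by
        rw [← dist_eq_norm]; exact Metric.mem_sphere.1 hzsph
      set s : ℝ := ‖y - xb‖/(r/2) with hsdef
      have hs0 : 0 < s := by positivity
      have hsd : s • (z - xb) = y - xb := by
        rw [hd, smul_smul, hsdef]
        have : ‖y - xb‖/(r/2) * ((r/2)/‖y - xb‖) = 1 := by
          field_simp
          try ring
        rw [this, one_smul]
      have hsT : s ≤ T i := by
        rw [hsdef, div_le_iff₀ (by positivity : (0:ℝ) < r/2)]
        have h1 : ‖y - xb‖ < T i * (r/2) := lt_of_lt_of_le hur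
          (le_trans (min_le_left _ _) hδ₀i)
        linarith
      have hTir : T i * ‖z - xb‖ < r := by
        rw [hznorm]
        have := hT1 i
        nlinarith
      have hq1 := key_mono (z - xb) s (T i) hs0 hsT hTir
      rw [hsd] at hq1
      have hyy : xb + (y - xb) = y := by abel
      rw [hyy] at hq1
      have hq2 : (Gr (xb + T i • (z - xb)) - p) / T i < ⟪v, z - xb⟫ + ε * (r/2) := by
        rw [div_lt_iff₀ (hT0 i)]
        nlinarith [hzi2]
      have hq3 : (Gr y - p) / s < ⟪v, z - xb⟫ + ε * (r/2) := lt_of_le_of_lt hq1 hq2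
      rw [div_lt_iff₀ hs0] at hq3
      have hinner : ⟪v, y - xb⟫ = s * ⟪v, z - xb⟫ := by
        rw [← hsd, real_inner_smul_right]
      have hsr : s * (r/2) = ‖y - xb‖ := by
        rw [hsdef, div_mul_cancel₀ _ (by positivity : (r/2 : ℝ) ≠ 0)]
      have hGry : Gr y < p + ⟪v, y - xb⟫ + ε * ‖y - xb‖ := by
        rw [hinner, ← hsr]
        nlinarith [hq3]
      have hyD : y ∈ D := by
        apply hballD
        simp only [Metric.mem_ball, dist_eq_norm]
        have : δ ≤ r/2 := min_le_right _ _
        linarith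
      rw [hgxb, ← EReal.coe_add, hGrD y hyD, EReal.coe_le_coe_iff]
      linarith
  · have hb'e : b' = ∅ := Set.not_nonempty_iff_eq_empty.1 hbne
    filter_upwards [Metric.ball_mem_nhds xb (by positivity : (0:ℝ) < r/2)] with y hy
    refine ⟨hlower y, ?_⟩
    by_cases hyx : y = xb
    · exact htriv y hyx
    · exfalso
      have hzsph := hsphpt y hyx
      have := hb'cov hzsph
      rw [hb'e] at this
      simpa using this




lemma Ssub_singleton_imp (ψ : En → EReal) (xb : En) (p : ℝ)
    (hψxb : ψ xb = (p : EReal)) (v : En) (hS : Ssub ψ xb p = {v}) :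
    DiffAtE (convHullE ψ) xb v ∧ convHullE ψ xb = ψ xb := by
  have hvS : v ∈ Ssub ψ xb p := by rw [hS]; rfl
  have hle : ∀ x, ((p + ⟪v, x - xb⟫ : ℝ) : EReal) ≤ convHullE ψ x :=
    le_convHullE_of_affine_le hvS
  have hGxb : convHullE ψ xb = (p : EReal) := convHullE_at_eq hψxb hvS
  refine ⟨coreDiff _ (convexE_convHullE ψ) xb p hGxb v hle ?_, by rw [hGxb, hψxb]⟩
  intro w hw
  have hwS : w ∈ Ssub ψ xb p := fun x => le_trans (hw x) (convHullE_le ψ x)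
  rw [hS] at hwS
  exact hwS

lemma Ssub_singleton_of_diff (ψ : En → EReal) (hbot : ∀ x, ψ x ≠ ⊥) (xb : En) (p : ℝ)
    (hψxb : ψ xb = (p : EReal)) (v : En)
    (hdiff : DiffAtE (convHullE ψ) xb v)
    (heq : convHullE ψ xb = ψ xb) :
    Ssub ψ xb p = {v} := by
  obtain ⟨-, -, hdiff3⟩ := hdiff
  have hGxb : convHullE ψ xb = (p : EReal) := heq.trans hψxb
  -- a generic way to pick points on segments near xb
  have hpick : ∀ (x : En) (P : EuclideanSpace ℝ (Fin n) → Prop),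
      (∀ᶠ y in 𝓝 xb, P y) → ∃ t : ℝ, 0 < t ∧ t < 1 ∧ P (xb + t • (x - xb)) := by
    intro x P hP
    obtain ⟨δ, hδ0, hδ⟩ := Metric.eventually_nhds_iff.1 hP
    set t : ℝ := min (1/2) (δ/(2*(‖x - xb‖+1))) with htdef
    have ht0 : 0 < t := lt_min (by norm_num) (by positivity)
    have ht1 : t < 1 := lt_of_le_of_lt (min_le_left _ _) (by norm_num)
    refine ⟨t, ht0, ht1, hδ ?_⟩
    rw [dist_eq_norm, add_sub_cancel_left, norm_smul, Real.norm_eq_abs, abs_of_pos ht0]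
    have h1 : t ≤ δ/(2*(‖x - xb‖+1)) := min_le_right _ _
    have h2 : t * ‖x - xb‖ ≤ (δ/(2*(‖x - xb‖+1))) * ‖x - xb‖ :=
      mul_le_mul_of_nonneg_right h1 (norm_nonneg _)
    refine lt_of_le_of_lt h2 ?_
    rw [div_mul_eq_mul_div, div_lt_iff₀ (by positivity)]
    nlinarith [norm_nonneg (x - xb)]
  have hcomb : ∀ (x : En) (t : ℝ), xb + t • (x - xb) = t • x + (1 - t) • xb := by
    intro x t; module
  have hGbot : ∀ x, convHullE ψ x ≠ ⊥ := by
    intro x hxbot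
    by_cases hxxb : x = xb
    · rw [hxxb, hGxb] at hxbot; exact EReal.coe_ne_bot _ hxbot
    · obtain ⟨t, ht0, ht1, hPy⟩ := hpick x _ (hdiff3 1 one_pos)
      have hcv := convexE_convHullE ψ x xb t ht0 ht1
      rw [← hcomb x t] at hcv
      rw [hxbot, hGxb] at hcv
      have hbotmul : (t : EReal) * (⊥ : EReal) = ⊥ := EReal.coe_mul_bot_of_pos ht0
      have hcoemul : ((1 - t : ℝ) : EReal) * ((p : ℝ) : EReal) = (((1-t)*p : ℝ) : EReal) :=
        (EReal.coe_mul _ _).symm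
      rw [hbotmul, hcoemul, EReal.bot_add] at hcv
      have hle := hPy.1
      rw [le_bot_iff.1 hcv] at hle
      rw [hGxb, ← EReal.coe_add] at hle
      exact EReal.coe_ne_bot _ (le_bot_iff.1 hle)
  have huniq2 : ∀ v' ∈ Ssub ψ xb p, v' = v := by
    intro v' hv'
    have hle' : ∀ y, ((p + ⟪v', y - xb⟫ : ℝ) : EReal) ≤ convHullE ψ y :=
      le_convHullE_of_affine_le hv'
    show v' = v
    by_cases hvv : v' = v
    · exact hvv
    have hd0 : (0:ℝ) < ‖v' - v‖ := norm_pos_iff.2 (sub_ne_zero.2 hvv)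
    have hkey : ∀ ε : ℝ, 0 < ε → ‖v' - v‖ ≤ 0 + ε := by
      intro ε hε
      obtain ⟨t, ht0, ht1, hPy⟩ := hpick (xb + (v' - v)) _ (hdiff3 ε hε)
      have hyeq : xb + t • (xb + (v' - v) - xb) = xb + t • (v' - v) := by
        rw [add_sub_cancel_left]
      rw [hyeq] at hPy
      have hupper := hPy.2
      have hlow := hle' (xb + t • (v' - v))
      rw [add_sub_cancel_left] at hupper hlow
      rw [hGxb, ← EReal.coe_add] at hupper
      have hchain := le_trans hlow hupper
      rw [EReal.coe_le_coe_iff] at hchain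
      rw [real_inner_smul_right, real_inner_smul_right] at hchain
      rw [norm_smul, Real.norm_eq_abs, abs_of_pos ht0] at hchain
      have hinn : ⟪v', v' - v⟫ - ⟪v, v' - v⟫ = ‖v' - v‖ * ‖v' - v‖ := by
        rw [← inner_sub_left, real_inner_self_eq_norm_mul_norm]
      have h2 : t * ⟪v', v' - v⟫ ≤ t * ⟪v, v' - v⟫ + ε * (t * ‖v' - v‖) := by linarith
      have h3 : ‖v' - v‖ * ‖v' - v‖ ≤ ε * ‖v' - v‖ := by
        have := mul_le_mul_of_nonneg_left h2 (le_of_lt (inv_pos.2 ht0))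
        rw [mul_add] at this
        have e1 : t⁻¹ * (t * ⟪v', v' - v⟫) = ⟪v', v' - v⟫ := by field_simp
        have e2 : t⁻¹ * (t * ⟪v, v' - v⟫) = ⟪v, v' - v⟫ := by field_simp
        have e3 : t⁻¹ * (ε * (t * ‖v' - v‖)) = ε * ‖v' - v‖ := by field_simp
        rw [e1, e2, e3] at this
        linarith [hinn, this]
      rw [zero_add]
      nlinarith [h3, hd0]
    have : ‖v' - v‖ ≤ 0 := le_of_forall_pos_le_add hkey
    exact absurd (le_antisymm this (norm_nonneg _)) hd0.ne'
  have hmem : v ∈ Ssub ψ xb p := by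
    intro x
    by_cases hx : ψ x = ⊤
    · rw [hx]; exact le_top
    by_cases hxxb : x = xb
    · rw [hxxb, hψxb, EReal.coe_le_coe_iff]
      simp
    have hψxr : ψ x = (((ψ x).toReal : ℝ) : EReal) := (EReal.coe_toReal hx (hbot x)).symm
    have hGxne : convHullE ψ x ≠ ⊤ := by
      refine ne_top_of_le_ne_top ?_ (convHullE_le ψ x)
      rw [hψxr]; exact EReal.coe_ne_top _
    have hGxr : convHullE ψ x = (((convHullE ψ x).toReal : ℝ) : EReal) :=
      (EReal.coe_toReal hGxne (hGbot x)).symm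
    have hn0 : (0:ℝ) < ‖x - xb‖ := norm_pos_iff.2 (sub_ne_zero.2 hxxb)
    have hclaim : p + ⟪v, x - xb⟫ ≤ (convHullE ψ x).toReal := by
      refine le_of_forall_pos_le_add ?_
      intro ε' hε'
      set ε : ℝ := ε' / ‖x - xb‖ with hεdef
      have hε : 0 < ε := by positivity
      obtain ⟨t, ht0, ht1, hPy⟩ := hpick x _ (hdiff3 ε hε)
      have hlowb := hPy.1
      rw [hGxb, ← EReal.coe_add, add_sub_cancel_left] at hlowb
      have hcv := convexE_convHullE ψ x xb t ht0 ht1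
      rw [← hcomb x t, hGxb, hGxr] at hcv
      have hmul : (t : EReal) * (((convHullE ψ x).toReal : ℝ) : EReal)
          + ((1 - t : ℝ) : EReal) * ((p : ℝ) : EReal)
          = ((t * (convHullE ψ x).toReal + (1-t) * p : ℝ) : EReal) := by
        rw [EReal.coe_add, EReal.coe_mul, EReal.coe_mul]
      rw [hmul] at hcv
      have hchain := le_trans hlowb hcv
      rw [EReal.coe_le_coe_iff] at hchain
      rw [real_inner_smul_right, norm_smul, Real.norm_eq_abs, abs_of_pos ht0] at hchain
      -- p + t⟪v,x-xb⟫ - ε t ‖x-xb‖ ≤ t * Gx + (1-t) p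
      have hdiv : p + ⟪v, x - xb⟫ - ε * ‖x - xb‖ ≤ (convHullE ψ x).toReal := by
        nlinarith [hchain]
      have : ε * ‖x - xb‖ = ε' := by
        rw [hεdef, div_mul_cancel₀ _ hn0.ne']
      linarith [hdiv, this.le, this.ge]
    calc ((p + ⟪v, x - xb⟫ : ℝ) : EReal) ≤ (((convHullE ψ x).toReal : ℝ) : EReal) := by
          rw [EReal.coe_le_coe_iff]; exact hclaim
      _ = convHullE ψ x := hGxr.symm
      _ ≤ ψ x := convHullE_le ψ x
  exact Set.eq_singleton_iff_unique_mem.2 ⟨hmem, huniq2⟩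

/-- `∂_λ^φ f(x̄)` is a singleton iff `conv(f + λ⁻¹φ)` is differentiable
at `x̄` and coincides with `f + λ⁻¹φ` there; in that case
`∇conv(f + λ⁻¹φ)(x̄) = ū + λ⁻¹∇φ(x̄)` where `{ū} = ∂_λ^φ f(x̄)`. -/
theorem psub_singleton_iff_conv_differentiable (φ : En → ℝ) (domφ : Set En)
    (gradφ : En → En)
    (hLeg : IsLegendre φ domφ gradφ)
    (hcoer : Coercive1 φ domφ)
    (f : En → EReal) (hftop : ∀ x ∉ domφ, f x = ⊤) (hfbot : ∀ x, f x ≠ ⊥)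
    (hfproper : ∃ x ∈ domφ, f x ≠ ⊤)
    (hflsc : LowerSemicontinuousOn f domφ)
    (lam : ℝ) (hlam : 0 < lam)
    (hpb : ∃ μ : ℝ, lam < μ ∧ ∃ y ∈ interior domφ, envL φ domφ gradφ μ f y ≠ ⊥)
    (xb : En) (hxb : xb ∈ interior domφ) :
    ((∃ u, psub φ domφ gradφ lam f xb = {u}) ↔
      (∃ v, DiffAtE (convHullE fun x => f x + ((lam⁻¹ * φ x : ℝ) : EReal)) xb v ∧
        convHullE (fun x => f x + ((lam⁻¹ * φ x : ℝ) : EReal)) xb =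
          f xb + ((lam⁻¹ * φ xb : ℝ) : EReal))) ∧
    (∀ u, psub φ domφ gradφ lam f xb = {u} →
      DiffAtE (convHullE fun x => f x + ((lam⁻¹ * φ x : ℝ) : EReal)) xb
        (u + lam⁻¹ • gradφ xb) ∧
      convHullE (fun x => f x + ((lam⁻¹ * φ x : ℝ) : EReal)) xb =
        f xb + ((lam⁻¹ * φ xb : ℝ) : EReal)) := by
  classical
  set c : EuclideanSpace ℝ (Fin n) := lam⁻¹ • gradφ xb with hcdef
  set ψ : EuclideanSpace ℝ (Fin n) → EReal :=
    fun x => f x + ((lam⁻¹ * φ x : ℝ) : EReal) with hψdef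
  have hbotψ : ∀ x, ψ x ≠ ⊥ := by
    intro x h
    rw [hψdef] at h
    rcases EReal.add_eq_bot_iff.1 h with h | h
    · exact hfbot x h
    · exact EReal.coe_ne_bot _ h
  have hfwd : ∀ u, psub φ domφ gradφ lam f xb = {u} →
      DiffAtE (convHullE ψ) xb (u + c) ∧ convHullE ψ xb = ψ xb := by
    intro u hu
    have huu : u ∈ psub φ domφ gradφ lam f xb := by rw [hu]; rfl
    have hfxbtop : f xb ≠ ⊤ := by
      intro htop
      obtain ⟨x0, hx0dom, hx0⟩ := hfproper
      have h2 := huu.2 x0 hx0dom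
      rw [htop, EReal.top_add_coe, top_le_iff] at h2
      exact hx0 h2
    have hq : f xb = (((f xb).toReal : ℝ) : EReal) :=
      (EReal.coe_toReal hfxbtop (hfbot xb)).symm
    set q : ℝ := (f xb).toReal with hqdef
    set p : ℝ := q + lam⁻¹ * φ xb with hpdef
    have hψxb : ψ xb = (p : EReal) := by
      rw [hψdef]; dsimp only; rw [hq, ← EReal.coe_add]
    have hmemiff : ∀ u', u' ∈ psub φ domφ gradφ lam f xb ↔ (u' + c) ∈ Ssub ψ xb p :=
      fun u' => psub_iff_Ssub φ domφ gradφ lam f hftop hfbot xb hxb q hq u'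
    have hSsing : Ssub ψ xb p = {u + c} := by
      ext w
      simp only [mem_singleton_iff]
      constructor
      · intro hw
        have hw2 : (w - c) + c ∈ Ssub ψ xb p := by rwa [sub_add_cancel]
        have h3 := (hmemiff (w - c)).2 hw2
        rw [hu, mem_singleton_iff, sub_eq_iff_eq_add] at h3
        exact h3
      · rintro rfl
        exact (hmemiff u).1 huu
    exact Ssub_singleton_imp ψ xb p hψxb (u + c) hSsing
  constructor
  · constructor
    · rintro ⟨u, hu⟩
      obtain ⟨hd, he⟩ := hfwd u hu
      exact ⟨u + c, hd, he⟩
    · rintro ⟨v, hdiff, heq⟩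
      have hfxbtop : f xb ≠ ⊤ := by
        intro htop
        apply hdiff.1
        rw [heq, htop, EReal.top_add_coe]
      have hq : f xb = (((f xb).toReal : ℝ) : EReal) :=
        (EReal.coe_toReal hfxbtop (hfbot xb)).symm
      set q : ℝ := (f xb).toReal with hqdef
      set p : ℝ := q + lam⁻¹ * φ xb with hpdef
      have hψxb : ψ xb = (p : EReal) := by
        rw [hψdef]; dsimp only; rw [hq, ← EReal.coe_add]
      have heq' : convHullE ψ xb = ψ xb := heq
      have hS := Ssub_singleton_of_diff ψ hbotψ xb p hψxb v hdiff heq'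
      refine ⟨v - c, ?_⟩
      ext u'
      simp only [mem_singleton_iff]
      rw [show (u' ∈ psub φ domφ gradφ lam f xb) ↔ (u' + c) ∈ Ssub ψ xb p from
        psub_iff_Ssub φ domφ gradφ lam f hftop hfbot xb hxb q hq u', hS,
        mem_singleton_iff]
      constructor
      · intro h; rw [← h, add_sub_cancel_right]
      · intro h; rw [h, sub_add_cancel]
  · intro u hu
    exact hfwd u hu


end
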